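/- Let X be a uniformly convex Banach space, Ω, Δ nonempty subsets of X, and Ξ : X → X a cyclic orbital contraction on Ω ∪ Δ with constant η ∈ (0,1). Fix ς₀ ∈ Ω and define ς_{n+1} = Ξς_n for all n ≥ 0. Then ‖ς_n − ς_{n+1}‖ → dist(Ω,Δ) as n → ∞. -/

import Mathlib

open Filter Metric

theorem stmt3 {X : Type*} [NormedAddCommGroup X] [NormedSpace ℝ X] [UniformConvexSpace X]
    [CompleteSpace X] (Ω Δ : Set X) (hΩ : Ω.Nonempty) (hΔ : Δ.Nonempty)
    (Ξ : X → X) (η : ℝ) (hη : η ∈ Set.Ioo (0 : ℝ) 1)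
    (hcycΩ : Set.MapsTo Ξ Ω Δ) (hcycΔ : Set.MapsTo Ξ Δ Ω)
    (hbdd : ∀ x : X, Bornology.IsBounded (Set.range fun n => Ξ^[n] x))
    (hcontr : ∀ ς ∈ Ω, ∀ ϑ ∈ Δ,
      ‖Ξ ς - Ξ ϑ‖ ≤ η * sSup { r : ℝ |
      (∃ i j : ℕ, Odd ((i : ℤ) - j) ∧ r = ‖Ξ^[i] ς - Ξ^[j] ς‖) ∨
      (∃ k l : ℕ, Odd ((k : ℤ) - l) ∧ r = ‖Ξ^[k] ϑ - Ξ^[l] ϑ‖) ∨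
      (∃ p q : ℕ, Even ((p : ℤ) - q) ∧ r = ‖Ξ^[p] ς - Ξ^[q] ϑ‖) }
        + (1 - η) * sInf (Set.image2 (fun x y => ‖x - y‖) Ω Δ))
    (ς₀ : X) (hς₀ : ς₀ ∈ Ω) :
    Tendsto (fun n => ‖Ξ^[n] ς₀ - Ξ^[n + 1] ς₀‖) atTop (nhds (sInf (Set.image2 (fun x y => ‖x - y‖) Ω Δ))) := by
  obtain ⟨hη0, hη1⟩ := hη
  set d : ℝ := sInf (Set.image2 (fun x y => ‖x - y‖) Ω Δ) with hdd
  set x : ℕ → X := fun n => Ξ^[n] ς₀ with hx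
  have hxs : ∀ n, x (n + 1) = Ξ (x n) := fun n => Function.iterate_succ_apply' Ξ n ς₀
  have hxa : ∀ i a : ℕ, Ξ^[i] (x a) = x (i + a) := fun i a =>
    (Function.iterate_add_apply Ξ i a ς₀).symm
  -- parity of membership
  have hmem : ∀ n, (Even n → x n ∈ Ω) ∧ (Odd n → x n ∈ Δ) := by
    intro n
    induction n with
    | zero => exact ⟨fun _ => hς₀, fun h => absurd h (by simp [Nat.odd_iff])⟩
    | succ n ih =>
      constructor
      · intro h
        have hn : Odd n := by
          rcases Nat.even_or_odd n with he | ho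
          · exfalso; rcases he with ⟨m, hm⟩; rcases h with ⟨m', hm'⟩; omega
          · exact ho
        rw [hxs]; exact hcycΔ (ih.2 hn)
      · intro h
        have hn : Even n := by
          rcases Nat.even_or_odd n with he | ho
          · exact he
          · exfalso; rcases ho with ⟨m, hm⟩; rcases h with ⟨m', hm'⟩; omega
        rw [hxs]; exact hcycΩ (ih.1 hn)
  -- uniform bound on orbit
  obtain ⟨C, hC⟩ := Metric.isBounded_iff.1 (hbdd ς₀)
  have hCb : ∀ a b, ‖x a - x b‖ ≤ C := by
    intro a b
    have := hC (Set.mem_range_self a) (Set.mem_range_self b)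
    rwa [dist_eq_norm] at this
  -- d is a lower bound on distances between Ω and Δ
  have hdle : ∀ a ∈ Ω, ∀ b ∈ Δ, d ≤ ‖a - b‖ := by
    intro a ha b hb
    refine csInf_le ⟨0, ?_⟩ ⟨a, ha, b, hb, rfl⟩
    rintro r ⟨u, hu, v, hv, rfl⟩
    positivity
  have hdS : ∀ a b : ℕ, Odd ((a : ℤ) - b) → d ≤ ‖x a - x b‖ := by
    intro a b ho
    rcases Nat.even_or_odd a with hea | hoa
    · have hob : Odd b := by
        rcases ho with ⟨k, hk⟩; rcases hea with ⟨m, hm⟩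
        rw [Nat.odd_iff]; omega
      exact hdle _ ((hmem a).1 hea) _ ((hmem b).2 hob)
    · have heb : Even b := by
        rcases ho with ⟨k, hk⟩; rcases hoa with ⟨m, hm⟩
        rcases Nat.even_or_odd b with he | ⟨m', hm'⟩
        · exact he
        · exfalso; omega
      have := hdle _ ((hmem b).1 heb) _ ((hmem a).2 hoa)
      rwa [norm_sub_rev] at this
  -- the decreasing suprema
  set S : ℕ → Set ℝ := fun n =>
    {r | ∃ a b : ℕ, n ≤ a ∧ n ≤ b ∧ Odd ((a : ℤ) - b) ∧ r = ‖x a - x b‖} with hS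
  set D : ℕ → ℝ := fun n => sSup (S n) with hD
  have hoddn : ∀ n : ℕ, Odd ((n : ℤ) - (n + 1 : ℕ)) := by
    intro n; refine ⟨-1, ?_⟩; push_cast; ring
  have hSne : ∀ n, (S n).Nonempty := fun n =>
    ⟨‖x n - x (n + 1)‖, n, n + 1, le_rfl, by omega, hoddn n, rfl⟩
  have hSbdd : ∀ n, BddAbove (S n) := by
    intro n
    refine ⟨C, ?_⟩
    rintro r ⟨a, b, _, _, _, rfl⟩
    exact hCb a b
  have hmemS : ∀ n a b : ℕ, n ≤ a → n ≤ b → Odd ((a : ℤ) - b) → ‖x a - x b‖ ≤ D n :=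
    fun n a b ha hb ho => le_csSup (hSbdd n) ⟨a, b, ha, hb, ho, rfl⟩
  -- key contraction step
  have key : ∀ n a b : ℕ, n ≤ a → n ≤ b → Odd ((a : ℤ) - b) →
      ‖x (a + 1) - x (b + 1)‖ ≤ η * D n + (1 - η) * d := by
    intro n a b ha hb ho
    rcases Nat.even_or_odd a with hea | hoa
    · have hob : Odd b := by
        rcases ho with ⟨k, hk⟩; rcases hea with ⟨m, hm⟩
        rw [Nat.odd_iff]; omega
      have h1 := hcontr (x a) ((hmem a).1 hea) (x b) ((hmem b).2 hob)
      rw [show Ξ (x a) = x (a + 1) from (hxs a).symm,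
          show Ξ (x b) = x (b + 1) from (hxs b).symm] at h1
      refine h1.trans (add_le_add_left (mul_le_mul_of_nonneg_left ?_ hη0.le) _)
      refine csSup_le ⟨‖Ξ^[1] (x a) - Ξ^[0] (x a)‖, Or.inl ⟨1, 0, ⟨0, by ring⟩, rfl⟩⟩ ?_
      rintro r (⟨i, j, hij, rfl⟩ | ⟨k, l, hkl, rfl⟩ | ⟨p, q, hpq, rfl⟩)
      · rw [hxa, hxa]
        refine hmemS n (i + a) (j + a) (by omega) (by omega) ?_
        rcases hij with ⟨m, hm⟩; exact ⟨m, by push_cast; omega⟩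
      · rw [hxa, hxa]
        refine hmemS n (k + b) (l + b) (by omega) (by omega) ?_
        rcases hkl with ⟨m, hm⟩; exact ⟨m, by push_cast; omega⟩
      · rw [hxa, hxa]
        refine hmemS n (p + a) (q + b) (by omega) (by omega) ?_
        rcases hpq with ⟨m, hm⟩; rcases ho with ⟨m', hm'⟩
        exact ⟨m + m', by push_cast; push_cast at hm hm'; omega⟩
    · have heb : Even b := by
        rcases ho with ⟨k, hk⟩; rcases hoa with ⟨m, hm⟩
        rcases Nat.even_or_odd b with he | ⟨m', hm'⟩
        · exact he
        · exfalso; omega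
      have h1 := hcontr (x b) ((hmem b).1 heb) (x a) ((hmem a).2 hoa)
      rw [show Ξ (x b) = x (b + 1) from (hxs b).symm,
          show Ξ (x a) = x (a + 1) from (hxs a).symm, norm_sub_rev] at h1
      refine h1.trans (add_le_add_left (mul_le_mul_of_nonneg_left ?_ hη0.le) _)
      refine csSup_le ⟨‖Ξ^[1] (x b) - Ξ^[0] (x b)‖, Or.inl ⟨1, 0, ⟨0, by ring⟩, rfl⟩⟩ ?_
      rintro r (⟨i, j, hij, rfl⟩ | ⟨k, l, hkl, rfl⟩ | ⟨p, q, hpq, rfl⟩)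
      · rw [hxa, hxa]
        refine hmemS n (i + b) (j + b) (by omega) (by omega) ?_
        rcases hij with ⟨m, hm⟩; exact ⟨m, by push_cast; omega⟩
      · rw [hxa, hxa]
        refine hmemS n (k + a) (l + a) (by omega) (by omega) ?_
        rcases hkl with ⟨m, hm⟩; exact ⟨m, by push_cast; omega⟩
      · rw [hxa, hxa]
        refine hmemS n (p + b) (q + a) (by omega) (by omega) ?_
        rcases hpq with ⟨m, hm⟩; rcases ho with ⟨m', hm'⟩
        exact ⟨m - m' - 1, by push_cast; push_cast at hm hm'; omega⟩
  have hDd : ∀ n, d ≤ D n := fun n =>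
    (hdS n (n + 1) (hoddn n)).trans (hmemS n n (n + 1) le_rfl (by omega) (hoddn n))
  have hstep : ∀ n, D (n + 2) ≤ η * D n + (1 - η) * d := by
    intro n
    refine csSup_le (hSne _) ?_
    rintro r ⟨a, b, ha, hb, ho, rfl⟩
    obtain ⟨a', rfl⟩ : ∃ a', a = a' + 1 := ⟨a - 1, by omega⟩
    obtain ⟨b', rfl⟩ : ∃ b', b = b' + 1 := ⟨b - 1, by omega⟩
    refine key n a' b' (by omega) (by omega) ?_
    rcases ho with ⟨m, hm⟩; exact ⟨m, by push_cast; push_cast at hm; omega⟩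
  have hanti : Antitone D := by
    refine antitone_nat_of_succ_le fun n => csSup_le (hSne _) ?_
    rintro r ⟨a, b, ha, hb, ho, rfl⟩
    exact hmemS n a b (by omega) (by omega) ho
  have hgeo : ∀ k, D (2 * k) - d ≤ η ^ k * (D 0 - d) := by
    intro k
    induction k with
    | zero => simp
    | succ k ih =>
      have h2 : D (2 * k + 2) ≤ η * D (2 * k) + (1 - η) * d := hstep _
      have h3 : D (2 * (k + 1)) - d ≤ η * (D (2 * k) - d) := by
        rw [show 2 * (k + 1) = 2 * k + 2 by ring]; nlinarith
      calc D (2 * (k + 1)) - d ≤ η * (D (2 * k) - d) := h3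
        _ ≤ η * (η ^ k * (D 0 - d)) := mul_le_mul_of_nonneg_left ih hη0.le
        _ = η ^ (k + 1) * (D 0 - d) := by ring
  have hbound : ∀ n, D n ≤ η ^ (n / 2) * (D 0 - d) + d := by
    intro n
    have h1 : D n ≤ D (2 * (n / 2)) := hanti (by omega)
    have h2 := hgeo (n / 2)
    linarith
  have hlow : ∀ n, d ≤ ‖x n - x (n + 1)‖ := fun n => hdS n (n + 1) (hoddn n)
  have hup : ∀ n, ‖x n - x (n + 1)‖ ≤ η ^ (n / 2) * (D 0 - d) + d := fun n =>
    (hmemS n n (n + 1) le_rfl (by omega) (hoddn n)).trans (hbound n)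
  have htends : Tendsto (fun n : ℕ => η ^ (n / 2) * (D 0 - d) + d) atTop (nhds d) := by
    have h0 : Tendsto (fun n : ℕ => η ^ (n / 2)) atTop (nhds 0) :=
      (tendsto_pow_atTop_nhds_zero_of_lt_one hη0.le hη1).comp
        (tendsto_atTop_atTop.2 fun b => ⟨2 * b, fun n hn => by omega⟩)
    have := (h0.mul_const (D 0 - d)).add_const d
    simpa using this
  exact tendsto_of_tendsto_of_tendsto_of_le_of_le tendsto_const_nhds htends hlow hup
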